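/- Let k ≥ 1, let L be a set of k×k real matrices, and let U ⊆ ℝ^k be an open set such that exp(t·l)·x ∈ U for every t ∈ ℝ, l ∈ L and x ∈ U. Let F : U → ℝ^k be continuously differentiable. Then the following are equivalent: (i) for every x ∈ U and every l ∈ L, the Fréchet derivative of F at x evaluated at l·x equals l·F(x); (ii) for every t ∈ ℝ, every l ∈ L and every x ∈ U, F(exp(t·l)·x) = exp(t·l)·F(x). -/

import Mathlib

open NormedSpace

section aux

attribute [local instance]
  Matrix.linftyOpNormedRing Matrix.linftyOpNormedAlgebra

variable {k : ℕ}

local instance : CompleteSpace (Matrix (Fin k) (Fin k) ℝ) :=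
  FiniteDimensional.complete ℝ _

/-- `mulVec` as a continuous bilinear map. -/
noncomputable def mvCLM (k : ℕ) :
    Matrix (Fin k) (Fin k) ℝ →L[ℝ] (Fin k → ℝ) →L[ℝ] (Fin k → ℝ) :=
  LinearMap.toContinuousLinearMap
    { toFun := fun A => LinearMap.toContinuousLinearMap (Matrix.mulVecLin A)
      map_add' := fun A B => by
        ext v; simp [Matrix.add_mulVec]
      map_smul' := fun c A => by
        ext v; simp [Matrix.smul_mulVec] }

lemma mvCLM_apply (A : Matrix (Fin k) (Fin k) ℝ) (v : Fin k → ℝ) :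
    mvCLM k A v = A.mulVec v := rfl

/-- Derivative of the flow `t ↦ exp(t•l)·x`. -/
lemma hasDerivAt_flow (l : Matrix (Fin k) (Fin k) ℝ) (x : Fin k → ℝ) (t : ℝ) :
    HasDerivAt (fun s : ℝ => (exp (s • l)).mulVec x)
      (l.mulVec ((exp (t • l)).mulVec x)) t := by
  have h : HasDerivAt (fun s : ℝ => exp (s • l)) (l * exp (t • l)) t :=
    hasDerivAt_exp_smul_const' l t
  have h2 := ((mvCLM k).flip x).hasFDerivAt.comp_hasDerivAt t h
  have h3 : HasDerivAt (fun s : ℝ => (exp (s • l)).mulVec x) ((l * exp (t • l)).mulVec x) t := h2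
  rwa [← Matrix.mulVec_mulVec] at h3

lemma exp_mul_exp_neg (l : Matrix (Fin k) (Fin k) ℝ) (t : ℝ) :
    exp (t • l) * exp (t • (-l)) = 1 := by
  rw [← Matrix.exp_add_of_commute]
  · simp
  · simpa using ((Commute.refl l).neg_right.smul_right t).smul_left t

/-- Let `k ≥ 1`, `L` a set of `k × k` real matrices, and `U ⊆ ℝ^k`
an open set invariant under all flows `x ↦ exp(t • l) · x` for `l ∈ L`. Let
`F : U → ℝ^k` be continuously differentiable. Then the infinitesimal commutation
condition `DF(x)(l·x) = l·F(x)` holds on `U` for all `l ∈ L` if and only if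
`F(exp(t·l)·x) = exp(t·l)·F(x)` for all `t`, `l ∈ L`, `x ∈ U`. -/
theorem stmt_0 (k : ℕ) (hk : 1 ≤ k)
    (L : Set (Matrix (Fin k) (Fin k) ℝ))
    (U : Set (Fin k → ℝ)) (hU : IsOpen U)
    (hinv : ∀ t : ℝ, ∀ l ∈ L, ∀ x ∈ U, (NormedSpace.exp (t • l)).mulVec x ∈ U)
    (F : (Fin k → ℝ) → (Fin k → ℝ)) (hF : ContDiffOn ℝ 1 F U) :
    (∀ x ∈ U, ∀ l ∈ L, fderiv ℝ F x (l.mulVec x) = l.mulVec (F x)) ↔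
      (∀ t : ℝ, ∀ l ∈ L, ∀ x ∈ U,
        F ((NormedSpace.exp (t • l)).mulVec x)
          = (NormedSpace.exp (t • l)).mulVec (F x)) := by
  have hdiff : ∀ x ∈ U, HasFDerivAt F (fderiv ℝ F x) x := fun x hx =>
    ((hF.contDiffAt (hU.mem_nhds hx)).differentiableAt one_ne_zero).hasFDerivAt
  constructor
  · intro hcomm t l hl x hx
    set y : ℝ → Fin k → ℝ := fun s => (exp (s • l)).mulVec x with hy
    have hyU : ∀ s, y s ∈ U := fun s => hinv s l hl x hx
    set g : ℝ → Fin k → ℝ := fun s => (exp (s • (-l))).mulVec (F (y s)) with hg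
    have hg' : ∀ s, HasDerivAt g 0 s := by
      intro s
      -- derivative of `F (y s)`
      have hys : HasDerivAt y (l.mulVec (y s)) s := hasDerivAt_flow l x s
      have hFy : HasDerivAt (fun u => F (y u)) (fderiv ℝ F (y s) (l.mulVec (y s))) s :=
        (hdiff (y s) (hyU s)).comp_hasDerivAt s hys
      rw [hcomm (y s) (hyU s) l hl] at hFy
      -- derivative of the matrix part
      have hc : HasDerivAt (fun u : ℝ => exp (u • (-l))) (-l * exp (s • (-l))) s :=
        hasDerivAt_exp_smul_const' (-l) s
      have hc2 : HasDerivAt (fun u : ℝ => mvCLM k (exp (u • (-l))))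
          (mvCLM k (-l * exp (s • (-l)))) s :=
        (mvCLM k).hasFDerivAt.comp_hasDerivAt s hc
      have := hc2.clm_apply hFy
      have hcommute : exp (s • (-l)) * l = l * exp (s • (-l)) :=
        (((Commute.refl l).neg_right.smul_right s).exp_right).symm.eq
      have hzero : mvCLM k (-l * exp (s • (-l))) (F (y s)) +
          mvCLM k (exp (s • (-l))) (l.mulVec (F (y s))) = 0 := by
        simp only [mvCLM_apply, Matrix.mulVec_mulVec, Matrix.neg_mul, Matrix.neg_mulVec,
          hcommute]
        abel
      rw [hzero] at this
      exact this
    have hconst : g t = g 0 :=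
      is_const_of_deriv_eq_zero (fun s => (hg' s).differentiableAt)
        (fun s => (hg' s).deriv) t 0
    have hg0 : g 0 = F x := by
      simp [hg, hy, exp_zero, Matrix.one_mulVec]
    have : (exp (t • l)).mulVec (g t) = (exp (t • l)).mulVec (F x) := by
      rw [hconst, hg0]
    rw [hg] at this
    rwa [Matrix.mulVec_mulVec, exp_mul_exp_neg, Matrix.one_mulVec] at this
  · intro hequiv x hx l hl
    have h1 : HasDerivAt (fun s : ℝ => F ((exp (s • l)).mulVec x))
        (fderiv ℝ F x (l.mulVec x)) 0 := by
      have hys : HasDerivAt (fun s : ℝ => (exp (s • l)).mulVec x)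
          (l.mulVec ((exp ((0 : ℝ) • l)).mulVec x)) 0 := hasDerivAt_flow l x 0
      simp only [zero_smul, exp_zero, Matrix.one_mulVec] at hys
      have hx0 : (exp ((0 : ℝ) • l)).mulVec x = x := by simp
      refine HasFDerivAt.comp_hasDerivAt 0 ?_ hys
      rw [hx0]
      exact hdiff x hx
    have h2 : HasDerivAt (fun s : ℝ => (exp (s • l)).mulVec (F x))
        (l.mulVec (F x)) 0 := by
      have := hasDerivAt_flow l (F x) 0
      simpa using this
    have heq : (fun s : ℝ => F ((exp (s • l)).mulVec x)) =
        fun s : ℝ => (exp (s • l)).mulVec (F x) :=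
      funext fun s => hequiv s l hl x hx
    rw [heq] at h1
    exact h1.unique h2

end aux
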